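/- For k ≥ 3 and a word w of length 2k over {a,b} with k occurrences of a and k occurrences of b, ScatFact_k(w) = Σ^k (all 2^k words of length k) if and only if w ∈ {ab, ba}^k. -/

import Mathlib

def wa : Bool := false
def wb : Bool := true

/-- The set of scattered factors (subsequences) of `w` of length exactly `k`. -/
def ScatFact (k : ℕ) (w : List Bool) : Finset (List Bool) :=
  (w.sublists.filter (fun u => u.length = k)).toFinset

def AltBlocks (k : ℕ) (u : List Bool) : Prop :=
  ∃ blocks : List (List Bool), blocks.length = k ∧
    (∀ b ∈ blocks, b = [wa, wb] ∨ b = [wb, wa]) ∧ u = blocks.flatten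

lemma mem_scatfact {k : ℕ} {w v : List Bool} :
    v ∈ ScatFact k w ↔ List.Sublist v w ∧ v.length = k := by
  simp [ScatFact, List.mem_filter, List.mem_sublists]

lemma back_aux : ∀ (bs : List (List Bool)),
    (∀ b ∈ bs, b = [wa, wb] ∨ b = [wb, wa]) →
    ∀ v : List Bool, v.length = bs.length → List.Sublist v bs.flatten := by
  intro bs
  induction bs with
  | nil =>
    intro _ v hv
    simp at hv
    simp [hv]
  | cons B bs ih =>
    intro h v hv
    cases v with
    | nil => simp at hv
    | cons x v' =>
      have h1 : List.Sublist [x] B := by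
        rcases h B (by simp) with hB | hB <;> subst hB <;> cases x <;> decide
      have h2 : List.Sublist v' bs.flatten := ih (fun b hb => h b (by simp [hb])) v' (by simpa using hv)
      have := List.Sublist.append h1 h2
      simpa using this

lemma forward : ∀ (k : ℕ) (w : List Bool), w.length = 2 * k →
    w.count false = k → w.count true = k →
    (∀ v : List Bool, v.length = k → List.Sublist v w) → AltBlocks k w := by
  intro k
  induction k with
  | zero =>
    intro w hlen _ _ _
    have : w = [] := by
      cases w with
      | nil => rfl
      | cons a t => simp at hlen
    exact ⟨[], rfl, by simp, by simp [this]⟩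
  | succ k ih =>
    intro w hlen ha hb hfull
    match w, hlen with
    | c1 :: c2 :: rest, hlen =>
      have hlen' : rest.length = 2 * k := by
        simp at hlen; omega
      -- first two letters differ
      have hne : c1 ≠ c2 := by
        intro hceq
        subst hceq
        have hcount : (c1 :: c1 :: rest).count c1 = rest.count c1 + 2 := by
          simp [List.count_cons]
        have hcw : (c1 :: c1 :: rest).count c1 = k + 1 := by
          cases c1 <;> [exact ha; exact hb]
        obtain ⟨d, hd⟩ : ∃ d, d = !c1 := ⟨_, rfl⟩
        have hv : List.Sublist (d :: List.replicate k c1) (c1 :: c1 :: rest) := by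
          rw [hd]; exact hfull _ (by simp)
        have hdne : d ≠ c1 := by rw [hd]; cases c1 <;> decide
        have hv2 : List.Sublist (d :: List.replicate k c1) rest := by
          cases hv with
          | cons _ hv1 =>
            cases hv1 with
            | cons _ hv2 => exact hv2
            | cons_cons _ h => exact absurd rfl hdne
          | cons_cons _ h => exact absurd rfl hdne
        have hcv : (d :: List.replicate k c1).count c1 = k := by
          simp [List.count_cons, List.count_replicate, hdne]
        have hle := hv2.count_le c1
        omega
      -- counts of rest
      have harest : rest.count false = k := by
        cases c1 <;> cases c2 <;> first
          | exact absurd rfl hne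
          | (simp [List.count_cons] at ha; omega)
      have hbrest : rest.count true = k := by
        cases c1 <;> cases c2 <;> first
          | exact absurd rfl hne
          | (simp [List.count_cons] at hb; omega)
      -- fullness for rest
      have hfull' : ∀ v : List Bool, v.length = k → List.Sublist v rest := by
        intro v' hv'
        obtain ⟨d, hd⟩ : ∃ d, d = !c1 := ⟨_, rfl⟩
        have hv : List.Sublist (d :: v') (c1 :: c2 :: rest) := by
          rw [hd]; exact hfull _ (by simp [hv'])
        have hdne : d ≠ c1 := by rw [hd]; cases c1 <;> decide
        have hdc2 : c2 = d := by rw [hd]; cases c1 <;> cases c2 <;> first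
          | exact absurd rfl hne
          | rfl
        subst hdc2
        cases hv with
        | cons _ hv1 =>
          cases hv1 with
          | cons _ hv2 => exact (List.sublist_cons_self _ v').trans hv2
          | cons_cons _ h => exact h
        | cons_cons _ h => exact absurd rfl hdne
      obtain ⟨bs, hbslen, hbsmem, hbsjoin⟩ := ih rest hlen' harest hbrest hfull'
      refine ⟨[c1, c2] :: bs, by simp [hbslen], ?_, by simp [hbsjoin]⟩
      intro b hbmem
      rcases List.mem_cons.mp hbmem with hb1 | hb2
      · subst hb1
        cases c1 <;> cases c2 <;> first
          | exact absurd rfl hne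
          | exact Or.inl rfl
          | exact Or.inr rfl
      · exact hbsmem b hb2
theorem scatfact_full_balanced (k : ℕ) (hk : 3 ≤ k) (w : List Bool)
    (hlen : w.length = 2 * k) (ha : w.count wa = k) (hb : w.count wb = k) :
    (∀ v : List Bool, v.length = k → v ∈ ScatFact k w) ↔ AltBlocks k w := by
  constructor
  · intro hfull
    exact forward k w hlen ha hb (fun v hv => (mem_scatfact.mp (hfull v hv)).1)
  · rintro ⟨bs, hbslen, hbsmem, hbsjoin⟩ v hv
    refine mem_scatfact.mpr ⟨?_, hv⟩
    rw [hbsjoin]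
    exact back_aux bs hbsmem v (by rw [hv, hbslen])
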